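/- Let 𝒜, ℱ, 𝒢 be σ-algebras (𝒜 on X; ℱ, 𝒢 on U) with 𝒜 and ℱ ∩ 𝒢 countably generated, and suppose (𝒜 ⊗ ℱ) ∩ (𝒜 ⊗ 𝒢) is countably generated and its atoms are all singletons. Assume further that countably generated σ-algebras on X × U contained in a common analytic standard Borel structure with the same atoms are equal (Blackwell–Mackey property). Then (𝒜 ⊗ ℱ) ∩ (𝒜 ⊗ 𝒢) = 𝒜 ⊗ (ℱ ∩ 𝒢). -/
import Mathlib


open MeasureTheory

/-- An atom of a σ-algebra: a nonempty measurable set whose only measurable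
subsets are `∅` and itself. -/
def IsMeasurableAtom {X : Type*} (m : MeasurableSpace X) (A : Set X) : Prop :=
  A.Nonempty ∧ MeasurableSet[m] A ∧
    ∀ s : Set X, MeasurableSet[m] s → s ⊆ A → s = ∅ ∨ s = A

open MeasurableSpace in
/-- In a countably generated measurable space, each measurable atom is measurable. -/
lemma measurableSet_measurableAtom_of_cg {α : Type*} [m : MeasurableSpace α]
    [CountablyGenerated α] (x : α) : MeasurableSet (measurableAtom x) := by
  classical
  set g := natGeneratingSequence α with hg
  set A : Set α := ⋂ n, if x ∈ g n then g n else (g n)ᶜ with hA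
  have hgm : ∀ n, MeasurableSet (g n) := measurableSet_natGeneratingSequence
  have hAmeas : MeasurableSet A := by
    refine MeasurableSet.iInter fun n => ?_
    by_cases h : x ∈ g n
    · simpa [h] using hgm n
    · simpa [h] using (hgm n).compl
  have hxA : x ∈ A := by
    refine Set.mem_iInter.2 fun n => ?_
    by_cases h : x ∈ g n <;> simp [h]
  have key : ∀ s : Set α, MeasurableSet s → A ⊆ s ∨ A ⊆ sᶜ := by
    intro s hs
    rw [← generateFrom_natGeneratingSequence α] at hs
    refine generateFrom_induction (Set.range g) (fun s _ => A ⊆ s ∨ A ⊆ sᶜ)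
      ?_ ?_ ?_ ?_ s hs
    · rintro t ⟨n, rfl⟩ _
      by_cases h : x ∈ g n
      · exact Or.inl ((Set.iInter_subset _ n).trans (by simp [h]))
      · exact Or.inr ((Set.iInter_subset _ n).trans (by simp [h]))
    · exact Or.inr (by simp)
    · rintro t _ (h | h)
      · exact Or.inr (by simpa using h)
      · exact Or.inl h
    · rintro f _ hf
      by_cases h : ∃ n, A ⊆ f n
      · obtain ⟨n, hn⟩ := h
        exact Or.inl (hn.trans (Set.subset_iUnion f n))
      · push_neg at h
        refine Or.inr ?_
        rw [Set.compl_iUnion]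
        refine Set.subset_iInter fun n => ?_
        rcases hf n with h' | h'
        · exact absurd h' (h n)
        · exact h'
  have hAeq : measurableAtom x = A := by
    refine Set.Subset.antisymm (measurableAtom_subset hAmeas hxA) ?_
    intro y hy
    simp only [measurableAtom, Set.mem_iInter]
    intro s hxs hs
    rcases key s hs with h | h
    · exact h hy
    · exact absurd hxs (h hxA)
  rw [hAeq]
  exact hAmeas

open MeasurableSpace in
/-- In a countably generated measurable space, the atoms are exactly the measurable atoms
of points. -/
lemma isMeasurableAtom_iff_cg {α : Type*} [m : MeasurableSpace α]
    [CountablyGenerated α] (K : Set α) :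
    IsMeasurableAtom m K ↔ ∃ x, K = measurableAtom x := by
  constructor
  · rintro ⟨⟨x, hx⟩, hK, hmin⟩
    refine ⟨x, ?_⟩
    have h1 : measurableAtom x ⊆ K := measurableAtom_subset hK hx
    have h2 : K ⊆ measurableAtom x := by
      intro y hy
      simp only [measurableAtom, Set.mem_iInter]
      intro s hxs hs
      rcases hmin (K ∩ s) (hK.inter hs) Set.inter_subset_left with h | h
      · exact absurd h (Set.Nonempty.ne_empty ⟨x, hx, hxs⟩)
      · rw [← h] at hy
        exact hy.2
    exact Set.Subset.antisymm h2 h1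
  · rintro ⟨x, rfl⟩
    refine ⟨⟨x, mem_measurableAtom_self x⟩, measurableSet_measurableAtom_of_cg x, ?_⟩
    intro s hs hsub
    by_cases h : x ∈ s
    · exact Or.inr (Set.Subset.antisymm hsub (measurableAtom_subset hs h))
    · refine Or.inl (Set.eq_empty_iff_forall_notMem.2 fun y hy => ?_)
      exact (measurableAtom_subset hs.compl h) (hsub hy) hy

theorem stmt_17 (X U : Type*) (𝒜 : MeasurableSpace X) (ℱ 𝒢 : MeasurableSpace U)
    [𝒜.CountablyGenerated] [(ℱ ⊓ 𝒢).CountablyGenerated]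
    [(𝒜.prod ℱ ⊓ 𝒜.prod 𝒢).CountablyGenerated]
    (hatoms : ∀ K : Set (X × U), IsMeasurableAtom (𝒜.prod ℱ ⊓ 𝒜.prod 𝒢) K →
      ∃ p : X × U, K = {p})
    (hBM : ∀ m₁ m₂ : MeasurableSpace (X × U), m₁.CountablyGenerated →
      m₂.CountablyGenerated →
      (∀ K : Set (X × U), IsMeasurableAtom m₁ K ↔ IsMeasurableAtom m₂ K) → m₁ = m₂) :
    𝒜.prod ℱ ⊓ 𝒜.prod 𝒢 = 𝒜.prod (ℱ ⊓ 𝒢) := by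
  set m₁ : MeasurableSpace (X × U) := 𝒜.prod ℱ ⊓ 𝒜.prod 𝒢 with hm₁
  set m₂ : MeasurableSpace (X × U) := 𝒜.prod (ℱ ⊓ 𝒢) with hm₂
  have h₂cg : m₂.CountablyGenerated := by
    letI := 𝒜; letI := ℱ ⊓ 𝒢
    exact inferInstanceAs (MeasurableSpace.CountablyGenerated (X × U))
  have h₁cg : m₁.CountablyGenerated := inferInstance
  -- every m₁-measurable atom is a singleton
  have hatom1 : ∀ p : X × U, @measurableAtom (X × U) m₁ p = {p} := by
    intro p
    obtain ⟨q, hq⟩ := hatoms (@measurableAtom (X × U) m₁ p)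
      ((@isMeasurableAtom_iff_cg (X × U) m₁ h₁cg _).2 ⟨p, rfl⟩)
    have hp : p ∈ @measurableAtom (X × U) m₁ p := @mem_measurableAtom_self (X × U) m₁ p
    rw [hq] at hp ⊢
    rw [Set.mem_singleton_iff] at hp
    rw [hp]
  -- every m₂-measurable atom is a singleton
  have hatom2 : ∀ p : X × U, @measurableAtom (X × U) m₂ p = {p} := by
    rintro ⟨x, u⟩
    refine Set.Subset.antisymm ?_ ?_
    · rintro ⟨y, v⟩ hyv
      -- key: for every m₁-measurable S containing (x,u), both (y,u) and (x,v) lie in S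
      have hmem : ∀ S : Set (X × U), MeasurableSet[m₁] S → (x, u) ∈ S →
          ((y, u) ∈ S ∧ (x, v) ∈ S) := by
        intro S hS hxu
        have hSF : MeasurableSet[𝒜.prod ℱ] S := hS.1
        have hSG : MeasurableSet[𝒜.prod 𝒢] S := hS.2
        have hT : MeasurableSet[𝒜] ((fun x' => (x', u)) ⁻¹' S) := by
          letI := 𝒜; letI := ℱ
          exact measurable_prodMk_right hSF
        have hVF : MeasurableSet[ℱ] (Prod.mk x ⁻¹' S) := by
          letI := 𝒜; letI := ℱ
          exact measurable_prodMk_left hSF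
        have hVG : MeasurableSet[𝒢] (Prod.mk x ⁻¹' S) := by
          letI := 𝒜; letI := 𝒢
          exact measurable_prodMk_left hSG
        have hV : MeasurableSet[ℱ ⊓ 𝒢] (Prod.mk x ⁻¹' S) :=
          MeasurableSpace.measurableSet_inf.2 ⟨hVF, hVG⟩
        have hTset : MeasurableSet[m₂] (((fun x' => (x', u)) ⁻¹' S) ×ˢ (Set.univ : Set U)) := by
          letI := 𝒜; letI := ℱ ⊓ 𝒢
          exact hT.prod MeasurableSet.univ
        have hVset : MeasurableSet[m₂] ((Set.univ : Set X) ×ˢ (Prod.mk x ⁻¹' S)) := by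
          letI := 𝒜; letI := ℱ ⊓ 𝒢
          exact MeasurableSet.univ.prod hV
        have hy' : (y, v) ∈ ((fun x' => (x', u)) ⁻¹' S) ×ˢ (Set.univ : Set U) :=
          @mem_of_mem_measurableAtom (X × U) m₂ (x, u) (y, v) hyv _ hTset
            ⟨hxu, Set.mem_univ _⟩
        have hv' : (y, v) ∈ (Set.univ : Set X) ×ˢ (Prod.mk x ⁻¹' S) :=
          @mem_of_mem_measurableAtom (X × U) m₂ (x, u) (y, v) hyv _ hVset
            ⟨Set.mem_univ _, hxu⟩
        exact ⟨hy'.1, hv'.2⟩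
      -- hence (y,u) and (x,v) belong to the m₁-atom of (x,u), which is {(x,u)}
      have hy : (y, u) ∈ @measurableAtom (X × U) m₁ (x, u) := by
        simp only [measurableAtom, Set.mem_iInter]
        intro s hxs hs
        exact (hmem s hs hxs).1
      have hv : (x, v) ∈ @measurableAtom (X × U) m₁ (x, u) := by
        simp only [measurableAtom, Set.mem_iInter]
        intro s hxs hs
        exact (hmem s hs hxs).2
      rw [hatom1 (x, u), Set.mem_singleton_iff, Prod.mk.injEq] at hy hv
      simp only [Set.mem_singleton_iff, Prod.mk.injEq]
      exact ⟨hy.1, hv.2⟩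
    · intro p hp
      rw [Set.mem_singleton_iff] at hp
      rw [hp]
      exact @mem_measurableAtom_self (X × U) m₂ (x, u)
  -- both σ-algebras have exactly the singletons as atoms
  refine hBM m₁ m₂ h₁cg h₂cg fun K => ?_
  rw [@isMeasurableAtom_iff_cg (X × U) m₁ h₁cg K,
    @isMeasurableAtom_iff_cg (X × U) m₂ h₂cg K]
  constructor
  · rintro ⟨p, rfl⟩
    exact ⟨p, by rw [hatom1 p, hatom2 p]⟩
  · rintro ⟨p, rfl⟩
    exact ⟨p, by rw [hatom1 p, hatom2 p]⟩
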